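/- Generalized Laguerre orthogonality: for α > -1 and nonnegative integers m, n, ∫_0^∞ x^α L_m^{(α)}(x) L_n^{(α)}(x) e^{-x} dx = (Γ(n+α+1)/n!) δ_{mn}, where L_k^{(α)}(x) = ∑_{p=0}^k (-1)^p C(k+α, k-p) x^p/p!. -/

import Mathlib

open MeasureTheory Finset


noncomputable def rise (x : ℝ) (p : ℕ) : ℝ := ∏ i ∈ Finset.range p, (x + i)

lemma rise_zero (x : ℝ) : rise x 0 = 1 := by simp [rise]

lemma rise_succ (x : ℝ) (p : ℕ) : rise x (p + 1) = rise x p * (x + p) := by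
  simp [rise, Finset.prod_range_succ]

lemma rise_succ_left (x : ℝ) (p : ℕ) : rise x (p + 1) = x * rise (x + 1) p := by
  rw [rise, Finset.prod_range_succ', rise, Nat.cast_zero, add_zero, mul_comm]
  congr 1
  exact Finset.prod_congr rfl fun i _ => by push_cast; ring

lemma Gamma_add_nat {x : ℝ} (hx : 0 < x) (p : ℕ) :
    Real.Gamma (x + p) = rise x p * Real.Gamma x := by
  induction p with
  | zero => simp [rise_zero]
  | succ p ih =>
      have h : x + (p + 1 : ℕ) = (x + p) + 1 := by push_cast; ring
      rw [h, Real.Gamma_add_one (by positivity), ih, rise_succ]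
      ring

lemma rise_diff (x : ℝ) (p : ℕ) :
    rise x (p + 1) - rise (x + 1) (p + 1) = -(p + 1) * rise (x + 1) p := by
  rw [rise_succ_left, rise_succ]
  push_cast
  ring

lemma alt_sum_pascal (f : ℕ → ℝ) (n : ℕ) :
    ∑ q ∈ range (n + 2), (-1 : ℝ) ^ q * ((n + 1).choose q) * f q
      = ∑ q ∈ range (n + 1), (-1 : ℝ) ^ q * (n.choose q) * (f q - f (q + 1)) := by
  have h1 : ∑ q ∈ range (n + 2), (-1 : ℝ) ^ q * ((n + 1).choose q) * f q
      = f 0 + ∑ q ∈ range (n + 1), (-1 : ℝ) ^ (q+1) * ((n + 1).choose (q+1)) * f (q+1) := by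
    rw [Finset.sum_range_succ' (fun q => (-1 : ℝ) ^ q * ((n + 1).choose q) * f q)]
    simp [add_comm]
  have h2 : ∀ q, ((n + 1).choose (q + 1) : ℝ) = (n.choose q : ℝ) + (n.choose (q+1) : ℝ) := by
    intro q; rw [Nat.choose_succ_succ]; push_cast; ring
  have h3 : ∑ q ∈ range (n + 1), (-1 : ℝ) ^ (q+1) * ((n + 1).choose (q+1)) * f (q+1)
      = (∑ q ∈ range (n + 1), (-1 : ℝ) ^ (q+1) * (n.choose (q+1)) * f (q+1))
        - ∑ q ∈ range (n + 1), (-1 : ℝ) ^ q * (n.choose q) * f (q+1) := by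
    rw [← Finset.sum_sub_distrib]
    apply Finset.sum_congr rfl
    intro q _
    rw [h2 q]
    ring
  have h4 : f 0 + ∑ q ∈ range (n + 1), (-1 : ℝ) ^ (q+1) * (n.choose (q+1)) * f (q+1)
      = ∑ q ∈ range (n + 1), (-1 : ℝ) ^ q * (n.choose q) * f q := by
    rw [Finset.sum_range_succ' (fun q => (-1 : ℝ) ^ q * (n.choose q) * f q)]
    rw [Finset.sum_range_succ (fun q => (-1 : ℝ) ^ (q+1) * (n.choose (q+1)) * f (q+1))]
    simp [add_comm]
  rw [h1, h3, ← add_sub_assoc, h4, ← Finset.sum_sub_distrib]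
  apply Finset.sum_congr rfl
  intro q _
  ring

lemma alt_choose_sum_eq_zero (n : ℕ) (hn : n ≠ 0) :
    ∑ q ∈ range (n + 1), (-1 : ℝ) ^ q * (n.choose q) = 0 := by
  have := Int.alternating_sum_range_choose_of_ne (by omega : n + 1 - 1 ≠ 0)
  simp only [Nat.add_sub_cancel] at this
  have h2 : ((∑ i ∈ range (n + 1), (-1 : ℤ) ^ i * ↑(n.choose i) : ℤ) : ℝ) = 0 := by
    rw [this]; simp
  push_cast at h2
  simpa using h2

lemma key_diff (n : ℕ) : ∀ (p : ℕ) (x : ℝ),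
    ∑ q ∈ range (n + 1), (-1 : ℝ) ^ q * (n.choose q) * rise (x + q) p
      = (-1) ^ n * (p.descFactorial n) * rise (x + n) (p - n) := by
  induction n with
  | zero => intro p x; simp [Nat.descFactorial]
  | succ n ih =>
      intro p x
      have hps : (n + 1) + 1 = n + 2 := rfl
      rw [hps, alt_sum_pascal (fun q => rise (x + q) p) n]
      match p with
      | 0 =>
          simp only [rise_zero, sub_self, mul_zero, Finset.sum_const_zero]
          simp [Nat.descFactorial]
      | p + 1 =>
          have hd : ∀ q : ℕ, rise (x + q) (p + 1) - rise (x + ((q + 1 : ℕ) : ℝ)) (p + 1)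
              = -((p : ℝ) + 1) * rise ((x + 1) + q) p := by
            intro q
            have h := rise_diff (x + q) p
            rw [show (x + (q:ℝ) + 1) = x + ((q + 1 : ℕ) : ℝ) by push_cast; ring] at h
            rw [h]
            push_cast
            have : (x + ((q:ℝ) + 1)) = x + 1 + (q:ℝ) := by ring
            rw [this]
          have heq : ∑ q ∈ range (n + 1), (-1 : ℝ) ^ q * (n.choose q) *
                (rise (x + q) (p+1) - rise (x + ((q + 1 : ℕ) : ℝ)) (p+1))
              = -((p : ℝ) + 1) * ∑ q ∈ range (n + 1), (-1 : ℝ) ^ q * (n.choose q) *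
                  rise ((x + 1) + q) p := by
            rw [Finset.mul_sum]
            apply Finset.sum_congr rfl
            intro q _
            rw [hd q]
            ring
          rw [heq, ih p (x + 1)]
          rw [show (x + 1 + (n:ℝ)) = x + ((n+1:ℕ):ℝ) by push_cast; ring]
          rw [Nat.succ_descFactorial_succ, Nat.succ_sub_succ]
          push_cast
          ring

lemma integrableOn_rpow_exp {s : ℝ} (hs : -1 < s) :
    IntegrableOn (fun x : ℝ => x ^ s * Real.exp (-x)) (Set.Ioi 0) := by
  have h := Real.GammaIntegral_convergent (show 0 < s + 1 by linarith)
  rw [show s + 1 - 1 = s by ring] at h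
  exact h.congr_fun (fun x _ => mul_comm _ _) measurableSet_Ioi

lemma integral_rpow_exp {s : ℝ} (hs : -1 < s) :
    ∫ x in Set.Ioi (0 : ℝ), x ^ s * Real.exp (-x) = Real.Gamma (s + 1) := by
  rw [Real.Gamma_eq_integral (show (0:ℝ) < s + 1 by linarith), show s + 1 - 1 = s by ring]
  exact setIntegral_congr_fun measurableSet_Ioi fun x _ => mul_comm _ _

lemma lag_inner_sum (α : ℝ) (hα : -1 < α) (n p : ℕ) :
    ∑ q ∈ range (n + 1),
        ((-1 : ℝ) ^ q * (Real.Gamma (↑n + α + 1) /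
            (Real.Gamma (↑q + α + 1) * ((n - q).factorial : ℝ))) / (q.factorial : ℝ)) *
          Real.Gamma (α + (↑p + ↑q) + 1)
      = Real.Gamma (↑n + α + 1) / (n.factorial : ℝ) *
          ((-1 : ℝ) ^ n * (p.descFactorial n : ℝ) * rise (α + 1 + ↑n) (p - n)) := by
  have hterm : ∀ q ∈ range (n + 1),
      ((-1 : ℝ) ^ q * (Real.Gamma (↑n + α + 1) /
          (Real.Gamma (↑q + α + 1) * ((n - q).factorial : ℝ))) / (q.factorial : ℝ)) *
        Real.Gamma (α + (↑p + ↑q) + 1)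
      = Real.Gamma (↑n + α + 1) / (n.factorial : ℝ) *
          ((-1 : ℝ) ^ q * (n.choose q : ℝ) * rise ((α + 1) + ↑q) p) := by
    intro q hq
    have hqn : q ≤ n := by simpa [Nat.lt_succ_iff] using Finset.mem_range.mp hq
    have hpos : (0 : ℝ) < α + 1 + ↑q := by
      have : (0:ℝ) ≤ (q:ℝ) := Nat.cast_nonneg q
      linarith
    have hG := Gamma_add_nat hpos p
    have harg : α + (↑p + ↑q) + 1 = (α + 1 + (q:ℝ)) + (p:ℕ) := by push_cast; ring
    rw [harg, hG, show (α + 1 + (q:ℝ)) = ↑q + α + 1 by ring]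
    have hfact : ((n.choose q : ℝ)) * (q.factorial : ℝ) * ((n - q).factorial : ℝ)
        = (n.factorial : ℝ) := by
      exact_mod_cast congrArg (Nat.cast (R := ℝ)) (Nat.choose_mul_factorial_mul_factorial hqn)
    have hΓ : Real.Gamma (↑q + α + 1) ≠ 0 := by
      apply ne_of_gt; apply Real.Gamma_pos_of_pos
      have : (0:ℝ) ≤ (q:ℝ) := Nat.cast_nonneg q
      linarith
    have hfq : (q.factorial : ℝ) ≠ 0 := Nat.cast_ne_zero.mpr q.factorial_ne_zero
    have hfnq : ((n - q).factorial : ℝ) ≠ 0 := Nat.cast_ne_zero.mpr (n - q).factorial_ne_zero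
    have hfn : (n.factorial : ℝ) ≠ 0 := Nat.cast_ne_zero.mpr n.factorial_ne_zero
    field_simp
    linear_combination (-(Real.Gamma (↑n + α + 1) * rise (↑q + α + 1) p)) * hfact
  rw [Finset.sum_congr rfl hterm, ← Finset.mul_sum, key_diff n p (α + 1)]

lemma lag_sum_eval (α : ℝ) (hα : -1 < α) (m n : ℕ) (hmn : m ≤ n) :
    ∑ p ∈ range (m + 1), ∑ q ∈ range (n + 1),
        (((-1:ℝ)^p * (Real.Gamma (↑m + α + 1) /
            (Real.Gamma (↑p + α + 1) * ((m-p).factorial:ℝ))) / (p.factorial:ℝ)) *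
         ((-1:ℝ)^q * (Real.Gamma (↑n + α + 1) /
            (Real.Gamma (↑q + α + 1) * ((n-q).factorial:ℝ))) / (q.factorial:ℝ))) *
          Real.Gamma (α + (↑p + ↑q) + 1)
      = if m = n then Real.Gamma (↑n + α + 1) / (n.factorial : ℝ) else 0 := by
  have hp : ∀ p ∈ range (m + 1),
      (∑ q ∈ range (n + 1),
        (((-1:ℝ)^p * (Real.Gamma (↑m + α + 1) /
            (Real.Gamma (↑p + α + 1) * ((m-p).factorial:ℝ))) / (p.factorial:ℝ)) *
         ((-1:ℝ)^q * (Real.Gamma (↑n + α + 1) /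
            (Real.Gamma (↑q + α + 1) * ((n-q).factorial:ℝ))) / (q.factorial:ℝ))) *
          Real.Gamma (α + (↑p + ↑q) + 1))
      = ((-1:ℝ)^p * (Real.Gamma (↑m + α + 1) /
            (Real.Gamma (↑p + α + 1) * ((m-p).factorial:ℝ))) / (p.factorial:ℝ)) *
        (Real.Gamma (↑n + α + 1) / (n.factorial : ℝ) *
          ((-1 : ℝ) ^ n * (p.descFactorial n : ℝ) * rise (α + 1 + ↑n) (p - n))) := by
    intro p _
    rw [← lag_inner_sum α hα n p, Finset.mul_sum]
    exact Finset.sum_congr rfl fun q _ => by ring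
  rw [Finset.sum_congr rfl hp]
  rcases eq_or_lt_of_le hmn with heq | hlt
  · subst heq
    rw [if_pos rfl]
    rw [Finset.sum_eq_single_of_mem m (Finset.self_mem_range_succ m)]
    · rw [Nat.sub_self, Nat.descFactorial_self, rise_zero]
      have hΓ : Real.Gamma ((m:ℝ) + α + 1) ≠ 0 := by
        apply ne_of_gt; apply Real.Gamma_pos_of_pos
        have : (0:ℝ) ≤ (m:ℝ) := Nat.cast_nonneg m
        linarith
      have hfm : (m.factorial : ℝ) ≠ 0 := Nat.cast_ne_zero.mpr m.factorial_ne_zero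
      have hsq : ((-1:ℝ)^m) * ((-1:ℝ)^m) = 1 := by
        rw [← pow_add]; exact Even.neg_one_pow ⟨m, rfl⟩
      simp only [Nat.factorial_zero, Nat.cast_one, mul_one]
      have h2 : ((-1:ℝ)) ^ (m * 2) = 1 := by
        rw [mul_comm, pow_mul]; norm_num
      field_simp
      linear_combination h2
    · intro p hpmem hpne
      have hplt : p < m := by
        have := Finset.mem_range.mp hpmem; omega
      rw [Nat.descFactorial_eq_zero_iff_lt.mpr hplt]
      simp
  · rw [if_neg (by omega)]
    apply Finset.sum_eq_zero
    intro p hpmem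
    have hplt : p < n := by
      have := Finset.mem_range.mp hpmem; omega
    rw [Nat.descFactorial_eq_zero_iff_lt.mpr hplt]
    simp


/-- generalized Laguerre polynomial L_k^{(α)}(x) = ∑_{p=0}^k (-1)^p C(k+α,k-p) x^p/p!,
with C(k+α,k-p) = Γ(k+α+1)/(Γ(p+α+1)(k-p)!). -/
noncomputable def laguerre (k : ℕ) (α : ℝ) (x : ℝ) : ℝ :=
  ∑ p ∈ Finset.range (k + 1),
    (-1) ^ p * (Real.Gamma (k + α + 1) / (Real.Gamma (p + α + 1) * ((k - p).factorial : ℝ))) *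
      x ^ p / (p.factorial : ℝ)

lemma lag_core (α : ℝ) (hα : -1 < α) (m n : ℕ) (hmn : m ≤ n) :
    (∫ x in Set.Ioi (0 : ℝ), x ^ α * laguerre m α x * laguerre n α x * Real.exp (-x)) =
      if m = n then Real.Gamma (n + α + 1) / (n.factorial : ℝ) else 0 := by
  have hint : ∀ p q : ℕ, IntegrableOn
      (fun x : ℝ => x ^ (α + ((p:ℝ) + (q:ℝ))) * Real.exp (-x)) (Set.Ioi 0) := by
    intro p q
    apply integrableOn_rpow_exp
    have h1 : (0:ℝ) ≤ (p:ℝ) := Nat.cast_nonneg p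
    have h2 : (0:ℝ) ≤ (q:ℝ) := Nat.cast_nonneg q
    linarith
  set A : ℕ → ℝ := fun p => (-1:ℝ)^p * (Real.Gamma (↑m + α + 1) /
      (Real.Gamma (↑p + α + 1) * ((m-p).factorial:ℝ))) / (p.factorial:ℝ) with hA
  set B : ℕ → ℝ := fun q => (-1:ℝ)^q * (Real.Gamma (↑n + α + 1) /
      (Real.Gamma (↑q + α + 1) * ((n-q).factorial:ℝ))) / (q.factorial:ℝ) with hB
  have hpoint : ∀ x ∈ Set.Ioi (0:ℝ),
      x ^ α * laguerre m α x * laguerre n α x * Real.exp (-x)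
        = ∑ p ∈ range (m+1), ∑ q ∈ range (n+1),
            A p * B q * (x ^ (α + ((p:ℝ) + (q:ℝ))) * Real.exp (-x)) := by
    intro x hx
    have hx0 : (0:ℝ) < x := hx
    have h1 : laguerre m α x = ∑ p ∈ range (m+1), A p * x ^ p := by
      unfold laguerre
      refine Finset.sum_congr rfl fun p _ => ?_
      rw [hA]; ring
    have h2 : laguerre n α x = ∑ q ∈ range (n+1), B q * x ^ q := by
      unfold laguerre
      refine Finset.sum_congr rfl fun q _ => ?_
      rw [hB]; ring
    rw [h1, h2]
    simp only [Finset.sum_mul, Finset.mul_sum]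
    rw [Finset.sum_comm]
    refine Finset.sum_congr rfl fun p _ => Finset.sum_congr rfl fun q _ => ?_
    have hr : x ^ (α + ((p:ℝ) + (q:ℝ))) = x ^ α * x ^ (p:ℕ) * x ^ (q:ℕ) := by
      rw [Real.rpow_add hx0, Real.rpow_add hx0, Real.rpow_natCast, Real.rpow_natCast, mul_assoc]
    rw [hr]; ring
  rw [setIntegral_congr_fun measurableSet_Ioi hpoint]
  rw [integral_finset_sum _ (fun p _ => integrable_finset_sum _
    (fun q _ => ((hint p q).const_mul (A p * B q))))]
  have hval : ∀ p ∈ range (m+1),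
      (∫ x in Set.Ioi (0:ℝ), ∑ q ∈ range (n+1),
          A p * B q * (x ^ (α + ((p:ℝ) + (q:ℝ))) * Real.exp (-x)))
        = ∑ q ∈ range (n+1), A p * B q * Real.Gamma (α + ((p:ℝ) + (q:ℝ)) + 1) := by
    intro p _
    rw [integral_finset_sum _ (fun q _ => ((hint p q).const_mul (A p * B q)))]
    refine Finset.sum_congr rfl fun q _ => ?_
    rw [integral_const_mul, integral_rpow_exp (by
      have h1 : (0:ℝ) ≤ (p:ℝ) := Nat.cast_nonneg p
      have h2 : (0:ℝ) ≤ (q:ℝ) := Nat.cast_nonneg q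
      linarith)]
  rw [Finset.sum_congr rfl hval]
  rw [hA, hB]
  exact lag_sum_eval α hα m n hmn

/-- generalized Laguerre orthogonality. -/
theorem laguerre_orthogonality (α : ℝ) (hα : -1 < α) (m n : ℕ) :
    (∫ x in Set.Ioi (0 : ℝ), x ^ α * laguerre m α x * laguerre n α x * Real.exp (-x)) =
      if m = n then Real.Gamma (n + α + 1) / (n.factorial : ℝ) else 0 := by
  rcases le_total m n with h | h
  · exact lag_core α hα m n h
  · have h2 := lag_core α hα n m h
    have hcomm : ∀ x : ℝ, x ^ α * laguerre m α x * laguerre n α x * Real.exp (-x)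
        = x ^ α * laguerre n α x * laguerre m α x * Real.exp (-x) := fun x => by ring
    simp_rw [hcomm]
    rw [h2]
    by_cases hmn : m = n
    · subst hmn; simp
    · rw [if_neg (Ne.symm hmn), if_neg hmn]
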